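/- Fix d ≥ 1 and permutations p_x, p_y of Fin d. For every permutation q of Fin d, the M-Origami pair associated to (q∘p_x∘q⁻¹, q∘p_y∘q⁻¹) is simultaneously conjugate to the M-Origami pair associated to (p_x, p_y). (In particular, simultaneously conjugate dessin pairs yield isomorphic M-Origamis; this is the key step showing T² and S·T⁻²·S⁻¹ stabilize every M-Origami, i.e., Γ(2) ⊆ Γ(O_β).) -/

import Mathlib

/-- `m_A` of the M-Origami pair associated to `(p_x, p_y)`
(squares labelled `0,1,2,3` instead of `1,2,3,4`):
`m_A (0,j) = (1,j)`, `m_A (1,j) = (0, p_y j)`, `m_A (2,j) = (3,j)`, `m_A (3,j) = (2, p_y⁻¹ j)`. -/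
def mOrigamiA {d : ℕ} (py : Equiv.Perm (Fin d)) : Equiv.Perm (Fin 4 × Fin d) :=
  Equiv.prodShear (Equiv.swap 0 1 * Equiv.swap 2 3 : Equiv.Perm (Fin 4))
    (fun i => if i = 1 then py else if i = 3 then py⁻¹ else Equiv.refl (Fin d))

/-- `m_B` of the M-Origami pair associated to `(p_x, p_y)`:
`m_B (0,j) = (2,j)`, `m_B (1,j) = (3,j)`, `m_B (2,j) = (0, p_x⁻¹ j)`, `m_B (3,j) = (1, p_x j)`. -/
def mOrigamiB {d : ℕ} (px : Equiv.Perm (Fin d)) : Equiv.Perm (Fin 4 × Fin d) :=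
  Equiv.prodShear (Equiv.swap 0 2 * Equiv.swap 1 3 : Equiv.Perm (Fin 4))
    (fun i => if i = 2 then px⁻¹ else if i = 3 then px else Equiv.refl (Fin d))

/-- Simultaneously conjugate dessin pairs yield simultaneously conjugate M-Origami pairs:
for any `q`, the M-Origami pair of `(q p_x q⁻¹, q p_y q⁻¹)` is simultaneously conjugate to
the M-Origami pair of `(p_x, p_y)`. -/
theorem mOrigami_conj {d : ℕ} (hd : 1 ≤ d) (px py : Equiv.Perm (Fin d))
    (q : Equiv.Perm (Fin d)) :
    ∃ c : Equiv.Perm (Fin 4 × Fin d),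
      c * mOrigamiA (q * py * q⁻¹) * c⁻¹ = mOrigamiA py ∧
      c * mOrigamiB (q * px * q⁻¹) * c⁻¹ = mOrigamiB px := by
  have hinv : ((Equiv.refl (Fin 4)).prodCongr q⁻¹)⁻¹ = (Equiv.refl (Fin 4)).prodCongr q := by
    ext ⟨i, j⟩ <;> simp [Equiv.Perm.inv_def, Equiv.prodCongr_symm]
  refine ⟨Equiv.prodCongr (Equiv.refl (Fin 4)) q⁻¹, ?_, ?_⟩ <;>
  · ext ⟨i, j⟩ <;>
      fin_cases i <;>
      simp [mOrigamiA, mOrigamiB, Equiv.prodShear, Equiv.Perm.mul_apply, hinv,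
        Equiv.swap_apply_def, Fin.ext_iff, mul_assoc, -Fin.val_eq_zero_iff] <;>
      split_ifs with h <;>
      first
        | exact absurd h (by decide)
        | exact absurd (by decide) h
        | simp [Equiv.Perm.mul_apply]
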